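/- Let γ be the standard Gaussian measure on ℝ and define G(x) = γ{z : z² ≥ 2·log x} (the upper tail of the chi-squared distribution with one degree of freedom evaluated at 2 log x). Then G is regularly varying at infinity with index 1: for every c > 0, the ratio G(c·x)/G(x) tends to 1/c as x → ∞. -/

import Mathlib

open MeasureTheory ProbabilityTheory Filter Set

noncomputable def phi (z : ℝ) : ℝ := gaussianPDFReal 0 1 z

lemma phi_def (z : ℝ) : phi z = (Real.sqrt (2 * Real.pi))⁻¹ * Real.exp (-(z ^ 2) / 2) := by
  simp [phi, gaussianPDFReal]

lemma phi_eq : phi = fun y : ℝ => (Real.sqrt (2 * Real.pi))⁻¹ * Real.exp (-(y ^ 2) / 2) := by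
  funext y; exact phi_def y

lemma phi_pos (z : ℝ) : 0 < phi z := gaussianPDFReal_pos 0 1 z one_ne_zero

lemma hasDerivAt_phi (z : ℝ) : HasDerivAt phi (-z * phi z) z := by
  have h1 : HasDerivAt (fun y : ℝ => -(y ^ 2) / 2) (-z) z := by
    have := ((hasDerivAt_pow 2 z).neg).div_const 2
    refine this.congr_deriv ?_
    ring
  have h2 := (h1.exp.const_mul (Real.sqrt (2 * Real.pi))⁻¹)
  rw [phi_eq]
  refine h2.congr_deriv ?_
  simp only []; ring

lemma tendsto_phi_atTop : Filter.Tendsto phi atTop (nhds 0) := by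
  rw [phi_eq]
  rw [show (0:ℝ) = (Real.sqrt (2 * Real.pi))⁻¹ * 0 by ring]
  apply Filter.Tendsto.const_mul
  apply Real.tendsto_exp_atBot.comp
  apply Filter.Tendsto.atBot_div_const (by norm_num)
  exact tendsto_neg_atTop_atBot.comp (tendsto_pow_atTop two_ne_zero)

lemma integrable_phi : Integrable phi := integrable_gaussianPDFReal 0 1

lemma hasDerivAt_negphi (x : ℝ) : HasDerivAt (fun z => -phi z) (x * phi x) x := by
  have := (hasDerivAt_phi x).neg
  refine this.congr_deriv ?_
  ring

lemma integrableOn_zphi {t : ℝ} (ht : 0 ≤ t) :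
    IntegrableOn (fun z => z * phi z) (Set.Ioi t) := by
  refine integrableOn_Ioi_deriv_of_nonneg' (l := 0) (fun x _ => hasDerivAt_negphi x) ?_ ?_
  · intro x hx
    exact mul_nonneg (le_of_lt (lt_of_le_of_lt ht hx)) (phi_pos x).le
  · simpa using tendsto_phi_atTop.neg

lemma integral_zphi {t : ℝ} (ht : 0 ≤ t) : ∫ z in Set.Ioi t, z * phi z = phi t := by
  have h := integral_Ioi_of_hasDerivAt_of_nonneg' (l := 0) (fun x _ => hasDerivAt_negphi x)
    (fun x hx => mul_nonneg (le_of_lt (lt_of_le_of_lt ht hx)) (phi_pos x).le)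
    (by simpa using tendsto_phi_atTop.neg)
  rw [h]; ring

lemma hasDerivAt_lower {x : ℝ} (hx : x ≠ 0) :
    HasDerivAt (fun z : ℝ => -((z⁻¹ - (z⁻¹) ^ 3) * phi z)) ((1 - 3 * (x⁻¹) ^ 4) * phi x) x := by
  have hinv := hasDerivAt_inv hx
  have hcube := hinv.pow 3
  have h := ((hinv.sub hcube).mul (hasDerivAt_phi x)).neg
  refine h.congr_deriv ?_
  have hphi := phi_pos x
  simp only [Pi.sub_apply, Pi.pow_apply]
  field_simp
  have hxx : x ^ 2 * x⁻¹ ^ 2 = 1 := by rw [← mul_pow, mul_inv_cancel₀ hx, one_pow]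
  linear_combination (-3 : ℝ) * hxx

lemma lower_tendsto :
    Filter.Tendsto (fun z : ℝ => -((z⁻¹ - (z⁻¹) ^ 3) * phi z)) atTop (nhds 0) := by
  have h1 : Filter.Tendsto (fun z : ℝ => z⁻¹ - (z⁻¹) ^ 3) atTop (nhds 0) := by
    have h0 : Filter.Tendsto (fun z : ℝ => z⁻¹) atTop (nhds 0) := tendsto_inv_atTop_zero
    simpa using h0.sub (h0.pow 3)
  simpa using (h1.mul tendsto_phi_atTop).neg

lemma lower_nonneg {t x : ℝ} (ht : 2 ≤ t) (hx : x ∈ Set.Ioi t) :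
    0 ≤ (1 - 3 * (x⁻¹) ^ 4) * phi x := by
  have hx2 : 2 ≤ x := le_of_lt (lt_of_le_of_lt ht hx)
  have hx0 : 0 < x := lt_of_lt_of_le two_pos hx2
  have h1 : (x⁻¹) ≤ 2⁻¹ := by
    apply inv_anti₀ two_pos hx2
  have h2 : (x⁻¹) ^ 4 ≤ (2⁻¹ : ℝ) ^ 4 :=
    pow_le_pow_left₀ (inv_nonneg.mpr hx0.le) h1 4
  have : 3 * (x⁻¹) ^ 4 ≤ 1 := by nlinarith
  exact mul_nonneg (by linarith) (phi_pos x).le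

lemma integrableOn_lower {t : ℝ} (ht : 2 ≤ t) :
    IntegrableOn (fun z : ℝ => (1 - 3 * (z⁻¹) ^ 4) * phi z) (Set.Ioi t) := by
  refine integrableOn_Ioi_deriv_of_nonneg' (l := 0)
    (fun x hx => hasDerivAt_lower (by intro h; rw [h] at hx; simp at hx; linarith))
    (fun x hx => lower_nonneg ht hx) lower_tendsto

lemma integral_lower {t : ℝ} (ht : 2 ≤ t) :
    ∫ z in Set.Ioi t, (1 - 3 * (z⁻¹) ^ 4) * phi z = (t⁻¹ - (t⁻¹) ^ 3) * phi t := by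
  have h := integral_Ioi_of_hasDerivAt_of_nonneg' (l := 0)
    (fun x hx => hasDerivAt_lower (by intro h; rw [h] at hx; simp at hx; linarith))
    (fun x hx => lower_nonneg ht hx) lower_tendsto
  rw [h]; ring

lemma Q_le {t : ℝ} (ht : 0 < t) : ∫ z in Set.Ioi t, phi z ≤ t⁻¹ * phi t := by
  calc ∫ z in Set.Ioi t, phi z ≤ ∫ z in Set.Ioi t, t⁻¹ * (z * phi z) := by
        apply setIntegral_mono_on integrable_phi.integrableOn
          ((integrableOn_zphi ht.le).const_mul t⁻¹) measurableSet_Ioi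
        intro z hz
        have h2 : 1 ≤ t⁻¹ * z := by
          rw [← inv_mul_cancel₀ ht.ne']
          exact mul_le_mul_of_nonneg_left (le_of_lt hz) (inv_nonneg.mpr ht.le)
        have h3 := mul_nonneg (sub_nonneg.mpr h2) (phi_pos z).le
        nlinarith [phi_pos z]
    _ = t⁻¹ * phi t := by rw [integral_const_mul, integral_zphi ht.le]

lemma Q_ge {t : ℝ} (ht : 2 ≤ t) :
    (t⁻¹ - (t⁻¹) ^ 3) * phi t ≤ ∫ z in Set.Ioi t, phi z := by
  rw [← integral_lower ht]
  apply setIntegral_mono_on (integrableOn_lower ht) integrable_phi.integrableOn measurableSet_Ioi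
  intro z hz
  have hz0 : 0 < z := lt_of_lt_of_le two_pos (le_of_lt (lt_of_le_of_lt ht hz))
  nlinarith [phi_pos z, pow_nonneg (inv_nonneg.mpr hz0.le) 4]

lemma Q_pos {t : ℝ} (ht : 2 ≤ t) : 0 < ∫ z in Set.Ioi t, phi z := by
  refine lt_of_lt_of_le ?_ (Q_ge ht)
  have ht0 : 0 < t := lt_of_lt_of_le two_pos ht
  have h1 : (t⁻¹) ^ 3 < t⁻¹ := by
    have : t⁻¹ < 1 := inv_lt_one_of_one_lt₀ (by linarith)
    have h0 : 0 < t⁻¹ := inv_pos.mpr ht0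
    nlinarith [mul_pos (mul_pos h0 (sub_pos.mpr this)) (by positivity : (0:ℝ) < 1 + t⁻¹)]
  exact mul_pos (by linarith) (phi_pos t)

lemma phi_even (x : ℝ) : phi (-x) = phi x := by
  rw [phi_def, phi_def, neg_pow]
  norm_num

lemma tail_eq {a : ℝ} (ha : 0 < a) :
    ((gaussianReal 0 1) {z : ℝ | a ≤ z ^ 2}).toReal
      = 2 * ∫ z in Set.Ioi (Real.sqrt a), phi z := by
  have hsa : 0 < Real.sqrt a := Real.sqrt_pos.mpr ha
  have hset : {z : ℝ | a ≤ z ^ 2} = Set.Iic (-Real.sqrt a) ∪ Set.Ici (Real.sqrt a) := by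
    ext z
    simp only [Set.mem_setOf_eq, Set.mem_union, Set.mem_Iic, Set.mem_Ici]
    rw [show a ≤ z ^ 2 ↔ Real.sqrt a ≤ |z| by
      rw [← Real.sqrt_sq_eq_abs]; exact (Real.sqrt_le_sqrt_iff (x := a) (y := z ^ 2) (sq_nonneg z)).symm]
    rw [le_abs]
    constructor
    · rintro (h | h)
      · exact Or.inr h
      · exact Or.inl (by linarith)
    · rintro (h | h)
      · exact Or.inr (by linarith)
      · exact Or.inl h
  rw [gaussianReal_apply_eq_integral 0 one_ne_zero]
  have hmeas : MeasurableSet {z : ℝ | a ≤ z ^ 2} :=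
    measurableSet_le measurable_const (measurable_id.pow_const 2)
  rw [ENNReal.toReal_ofReal (setIntegral_nonneg hmeas
    (fun z _ => gaussianPDFReal_nonneg 0 1 z))]
  rw [hset]
  show (∫ x in Set.Iic (-Real.sqrt a) ∪ Set.Ici (Real.sqrt a), phi x) = _
  rw [setIntegral_union (Set.Iic_disjoint_Ici.mpr (by intro h; linarith)) measurableSet_Ici
    integrable_phi.integrableOn integrable_phi.integrableOn]
  have hsym : ∫ z in Set.Iic (-Real.sqrt a), phi z = ∫ z in Set.Ioi (Real.sqrt a), phi z := by
    have h := integral_comp_neg_Iic (-Real.sqrt a) phi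
    rw [neg_neg] at h
    rw [← h]
    exact setIntegral_congr_fun measurableSet_Iic (fun x _ => (phi_even x).symm)
  rw [hsym, MeasureTheory.integral_Ici_eq_integral_Ioi]
  ring

lemma alg_lower (a b P cc : ℝ) (ha : a ≠ 0) (hb : b ≠ 0) (hcc : cc ≠ 0) (hP : P ≠ 0) :
    ((b⁻¹ - (b⁻¹) ^ 3) * (cc⁻¹ * P)) / (a⁻¹ * P) = 1 / cc * (a / b * (1 - (b⁻¹) ^ 2)) := by
  field_simp

lemma alg_upper (a b P cc : ℝ) (ha : a ≠ 0) (hb : b ≠ 0) (hcc : cc ≠ 0) (hP : P ≠ 0)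
    (h2 : a⁻¹ - (a⁻¹) ^ 3 ≠ 0) (h3 : 1 - (a⁻¹) ^ 2 ≠ 0) :
    (b⁻¹ * (cc⁻¹ * P)) / ((a⁻¹ - (a⁻¹) ^ 3) * P) = 1 / cc * (a / b / (1 - (a⁻¹) ^ 2)) := by
  have ha2 : a ^ 2 - 1 ≠ 0 := by
    intro h
    apply h3
    field_simp
    rw [show a ^ 2 = 1 by linarith]
    norm_num
  have hD : -(P * a * cc * b) + P * a ^ 3 * cc * b ≠ 0 := by
    rw [show -(P * a * cc * b) + P * a ^ 3 * cc * b = P * a * cc * b * (a ^ 2 - 1) by ring]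
    exact mul_ne_zero (mul_ne_zero (mul_ne_zero (mul_ne_zero hP ha) hcc) hb) ha2
  field_simp

/-- The chi-squared(1) tail evaluated at `2 log x`, i.e.
`G(x) = γ{z : z² ≥ 2 log x}` for `γ` the standard Gaussian measure,
is regularly varying at infinity with index 1: for every `c > 0`,
`G(c·x)/G(x) → 1/c` as `x → ∞`. -/
theorem chiSq_tail_regularly_varying (c : ℝ) (hc : 0 < c) :
    Tendsto
      (fun x : ℝ =>
        ((gaussianReal 0 1) {z : ℝ | 2 * Real.log (c * x) ≤ z ^ 2}).toReal /
          ((gaussianReal 0 1) {z : ℝ | 2 * Real.log x ≤ z ^ 2}).toReal)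
      atTop (nhds (1 / c)) := by
  have hlogc : Tendsto (fun x : ℝ => Real.log (c * x)) atTop atTop :=
    Real.tendsto_log_atTop.comp (Tendsto.const_mul_atTop hc tendsto_id)
  have hE : ∀ᶠ x : ℝ in atTop, 0 < x ∧ 2 ≤ Real.log x ∧ 2 ≤ Real.log (c * x) := by
    filter_upwards [eventually_gt_atTop (0:ℝ), Real.tendsto_log_atTop.eventually_ge_atTop 2,
      hlogc.eventually_ge_atTop 2] with x h1 h2 h3
    exact ⟨h1, h2, h3⟩
  set T : ℝ → ℝ := fun x => Real.sqrt (2 * Real.log x) with hTdef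
  set S : ℝ → ℝ := fun x => Real.sqrt (2 * Real.log (c * x)) with hSdef
  -- limits
  have h2log : Tendsto (fun x : ℝ => 2 * Real.log x) atTop atTop :=
    Tendsto.const_mul_atTop two_pos Real.tendsto_log_atTop
  have h2logc : Tendsto (fun x : ℝ => 2 * Real.log (c * x)) atTop atTop :=
    Tendsto.const_mul_atTop two_pos hlogc
  have hTinv : Tendsto (fun x => ((T x)⁻¹) ^ 2) atTop (nhds 0) := by
    apply Tendsto.congr' _ (tendsto_inv_atTop_zero.comp h2log)
    filter_upwards [hE] with x ⟨hx0, hlx, hlcx⟩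
    have ha : (0:ℝ) ≤ 2 * Real.log x := by linarith
    simp only [Function.comp_apply, hTdef]
    rw [inv_pow, Real.sq_sqrt ha]
  have hSinv : Tendsto (fun x => ((S x)⁻¹) ^ 2) atTop (nhds 0) := by
    apply Tendsto.congr' _ (tendsto_inv_atTop_zero.comp h2logc)
    filter_upwards [hE] with x ⟨hx0, hlx, hlcx⟩
    have ha : (0:ℝ) ≤ 2 * Real.log (c * x) := by linarith
    simp only [Function.comp_apply, hSdef]
    rw [inv_pow, Real.sq_sqrt ha]
  have hratio : Tendsto (fun x : ℝ => (2 * Real.log x) / (2 * Real.log (c * x)))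
      atTop (nhds 1) := by
    have hden : Tendsto (fun y : ℝ => 2 * Real.log c + 2 * y) atTop atTop :=
      tendsto_atTop_add_const_left _ _ (Tendsto.const_mul_atTop two_pos tendsto_id)
    have h2 : Tendsto (fun y : ℝ => 2 * Real.log c / (2 * Real.log c + 2 * y))
        atTop (nhds 0) := Tendsto.div_atTop tendsto_const_nhds hden
    have h3 : Tendsto (fun y : ℝ => 1 - 2 * Real.log c / (2 * Real.log c + 2 * y))
        atTop (nhds 1) := by simpa using (tendsto_const_nhds (x := (1:ℝ))).sub h2
    have h4 : Tendsto (fun y : ℝ => (2 * y) / (2 * Real.log c + 2 * y)) atTop (nhds 1) := by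
      apply Tendsto.congr' _ h3
      filter_upwards [hden.eventually_gt_atTop 0] with y hy
      have : Real.log c + y ≠ 0 := by linarith
      field_simp
      ring
    have h5 := h4.comp Real.tendsto_log_atTop
    apply Tendsto.congr' _ h5
    filter_upwards [hE] with x ⟨hx0, hlx, hlcx⟩
    simp only [Function.comp_apply]
    rw [Real.log_mul hc.ne' hx0.ne']
    ring_nf
  have hTS : Tendsto (fun x => T x / S x) atTop (nhds 1) := by
    have h6 : Tendsto (fun x : ℝ => Real.sqrt ((2 * Real.log x) / (2 * Real.log (c * x))))
        atTop (nhds 1) := by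
      have := (Real.continuous_sqrt.continuousAt (x := (1:ℝ))).tendsto.comp hratio
      simpa [Function.comp_def] using this
    apply Tendsto.congr' _ h6
    filter_upwards [hE] with x ⟨hx0, hlx, hlcx⟩
    rw [Real.sqrt_div (by linarith)]
  -- bounding functions
  have hL : Tendsto (fun x => 1 / c * (T x / S x * (1 - ((S x)⁻¹) ^ 2))) atTop
      (nhds (1 / c)) := by
    have := (hTS.mul ((tendsto_const_nhds (x := (1:ℝ))).sub hSinv)).const_mul (1 / c)
    simpa using this
  have hU : Tendsto (fun x => 1 / c * (T x / S x / (1 - ((T x)⁻¹) ^ 2))) atTop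
      (nhds (1 / c)) := by
    have := (hTS.div ((tendsto_const_nhds (x := (1:ℝ))).sub hTinv) (by norm_num)).const_mul (1 / c)
    simpa using this
  refine tendsto_of_tendsto_of_tendsto_of_le_of_le' hL hU ?_ ?_
  · -- lower bound
    filter_upwards [hE] with x ⟨hx0, hlx, hlcx⟩
    have ha : (0:ℝ) < 2 * Real.log x := by linarith
    have hac : (0:ℝ) < 2 * Real.log (c * x) := by linarith
    have hT2 : 2 ≤ T x := (Real.le_sqrt' two_pos).mpr (by norm_num; linarith)
    have hS2 : 2 ≤ S x := (Real.le_sqrt' two_pos).mpr (by norm_num; linarith)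
    have hT0 : 0 < T x := lt_of_lt_of_le two_pos hT2
    have hS0 : 0 < S x := lt_of_lt_of_le two_pos hS2
    have hTsq : T x ^ 2 = 2 * Real.log x := Real.sq_sqrt ha.le
    have hSsq : S x ^ 2 = 2 * Real.log (c * x) := Real.sq_sqrt hac.le
    have hphi : phi (S x) = c⁻¹ * phi (T x) := by
      rw [phi_def, phi_def, hSsq, hTsq, Real.log_mul hc.ne' hx0.ne']
      rw [show -(2 * (Real.log c + Real.log x)) / 2
          = -Real.log c + -(2 * Real.log x) / 2 by ring]
      rw [Real.exp_add, Real.exp_neg, Real.exp_log hc]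
      ring
    rw [tail_eq hac, tail_eq ha]
    rw [show Real.sqrt (2 * Real.log (c * x)) = S x from rfl,
      show Real.sqrt (2 * Real.log x) = T x from rfl]
    rw [mul_div_mul_left _ _ (two_ne_zero)]
    have hQT_ub : ∫ z in Set.Ioi (T x), phi z ≤ (T x)⁻¹ * phi (T x) := Q_le hT0
    have hQS_lb : ((S x)⁻¹ - ((S x)⁻¹) ^ 3) * phi (S x) ≤ ∫ z in Set.Ioi (S x), phi z :=
      Q_ge hS2
    have hQT_pos : 0 < ∫ z in Set.Ioi (T x), phi z := Q_pos hT2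
    have hQS_pos : 0 < ∫ z in Set.Ioi (S x), phi z := Q_pos hS2
    have key : (((S x)⁻¹ - ((S x)⁻¹) ^ 3) * phi (S x)) / ((T x)⁻¹ * phi (T x))
        ≤ (∫ z in Set.Ioi (S x), phi z) / ∫ z in Set.Ioi (T x), phi z := by
      apply div_le_div₀ hQS_pos.le hQS_lb hQT_pos hQT_ub
    refine le_trans (le_of_eq ?_) key
    rw [hphi]
    exact (alg_lower (T x) (S x) (phi (T x)) c hT0.ne' hS0.ne' hc.ne'
      (phi_pos (T x)).ne').symm
  · -- upper bound
    filter_upwards [hE] with x ⟨hx0, hlx, hlcx⟩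
    have ha : (0:ℝ) < 2 * Real.log x := by linarith
    have hac : (0:ℝ) < 2 * Real.log (c * x) := by linarith
    have hT2 : 2 ≤ T x := (Real.le_sqrt' two_pos).mpr (by norm_num; linarith)
    have hS2 : 2 ≤ S x := (Real.le_sqrt' two_pos).mpr (by norm_num; linarith)
    have hT0 : 0 < T x := lt_of_lt_of_le two_pos hT2
    have hS0 : 0 < S x := lt_of_lt_of_le two_pos hS2
    have hTsq : T x ^ 2 = 2 * Real.log x := Real.sq_sqrt ha.le
    have hSsq : S x ^ 2 = 2 * Real.log (c * x) := Real.sq_sqrt hac.le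
    have hphi : phi (S x) = c⁻¹ * phi (T x) := by
      rw [phi_def, phi_def, hSsq, hTsq, Real.log_mul hc.ne' hx0.ne']
      rw [show -(2 * (Real.log c + Real.log x)) / 2
          = -Real.log c + -(2 * Real.log x) / 2 by ring]
      rw [Real.exp_add, Real.exp_neg, Real.exp_log hc]
      ring
    rw [tail_eq hac, tail_eq ha]
    rw [show Real.sqrt (2 * Real.log (c * x)) = S x from rfl,
      show Real.sqrt (2 * Real.log x) = T x from rfl]
    rw [mul_div_mul_left _ _ (two_ne_zero)]
    have hQS_ub : ∫ z in Set.Ioi (S x), phi z ≤ (S x)⁻¹ * phi (S x) := Q_le hS0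
    have hQT_lb : ((T x)⁻¹ - ((T x)⁻¹) ^ 3) * phi (T x) ≤ ∫ z in Set.Ioi (T x), phi z :=
      Q_ge hT2
    have hQT_pos : 0 < ∫ z in Set.Ioi (T x), phi z := Q_pos hT2
    have hden_pos : 0 < ((T x)⁻¹ - ((T x)⁻¹) ^ 3) * phi (T x) := by
      have h0 : 0 < (T x)⁻¹ := inv_pos.mpr hT0
      have h1 : (T x)⁻¹ < 1 := inv_lt_one_of_one_lt₀ (by linarith)
      have : ((T x)⁻¹) ^ 3 < (T x)⁻¹ := by
        nlinarith [mul_pos (mul_pos h0 (sub_pos.mpr h1)) (by positivity : (0:ℝ) < 1 + (T x)⁻¹)]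
      exact mul_pos (by linarith) (phi_pos (T x))
    have key : (∫ z in Set.Ioi (S x), phi z) / ∫ z in Set.Ioi (T x), phi z
        ≤ ((S x)⁻¹ * phi (S x)) / (((T x)⁻¹ - ((T x)⁻¹) ^ 3) * phi (T x)) := by
      apply div_le_div₀ (mul_nonneg (inv_nonneg.mpr hS0.le) (phi_pos (S x)).le)
        hQS_ub hden_pos hQT_lb
    refine le_trans key (le_of_eq ?_)
    rw [hphi]
    have h0 : 0 < (T x)⁻¹ := inv_pos.mpr hT0
    have h1 : (T x)⁻¹ < 1 := inv_lt_one_of_one_lt₀ (by linarith)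
    have h2 : (T x)⁻¹ - ((T x)⁻¹) ^ 3 ≠ 0 := by
      nlinarith [mul_pos (mul_pos h0 (sub_pos.mpr h1)) (by positivity : (0:ℝ) < 1 + (T x)⁻¹)]
    have h3 : 1 - ((T x)⁻¹) ^ 2 ≠ 0 := by nlinarith
    exact alg_upper (T x) (S x) (phi (T x)) c hT0.ne' hS0.ne' hc.ne'
      (phi_pos (T x)).ne' h2 h3
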